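/- The full SPINT map is permutation-invariant: if E is a row-wise embedding map (row i of E(X^C) depends only on row i of X^C via a fixed function f), then for every permutation matrix P, CrossAttn(Q, P X + E(P X^C)) = CrossAttn(Q, X + E(X^C)). -/

import Mathlib

open Matrix

noncomputable def softmax {m n : ℕ} (A : Matrix (Fin m) (Fin n) ℝ) :
    Matrix (Fin m) (Fin n) ℝ :=
  Matrix.of fun i j => Real.exp (A i j) / ∑ k, Real.exp (A i k)

noncomputable def crossAttn {B N W : ℕ} (d : ℝ) (Q : Matrix (Fin B) (Fin W) ℝ)
    (WK WV : Matrix (Fin W) (Fin W) ℝ) (Z : Matrix (Fin N) (Fin W) ℝ) :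
    Matrix (Fin B) (Fin W) ℝ :=
  softmax ((Real.sqrt d)⁻¹ • (Q * (Z * WK)ᵀ)) * (Z * WV)

lemma crossAttn_rowPerm {B N W : ℕ} (d : ℝ) (Q : Matrix (Fin B) (Fin W) ℝ)
    (WK WV : Matrix (Fin W) (Fin W) ℝ) (Z Z' : Matrix (Fin N) (Fin W) ℝ)
    (π : Equiv.Perm (Fin N)) (h : ∀ i, Z' i = Z (π i)) :
    crossAttn d Q WK WV Z' = crossAttn d Q WK WV Z := by
  have hZWK : ∀ i j, (Z' * WK) i j = (Z * WK) (π i) j := by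
    intro i j; simp [mul_apply, h]
  have hZWV : ∀ i j, (Z' * WV) i j = (Z * WV) (π i) j := by
    intro i j; simp [mul_apply, h]
  have hA : ∀ i j, ((Real.sqrt d)⁻¹ • (Q * (Z' * WK)ᵀ)) i j
      = ((Real.sqrt d)⁻¹ • (Q * (Z * WK)ᵀ)) i (π j) := by
    intro i j
    simp only [Matrix.smul_apply, smul_eq_mul, mul_apply, transpose_apply, hZWK, h]
  have hS : ∀ i j, softmax ((Real.sqrt d)⁻¹ • (Q * (Z' * WK)ᵀ)) i j
      = softmax ((Real.sqrt d)⁻¹ • (Q * (Z * WK)ᵀ)) i (π j) := by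
    intro i j
    simp only [softmax, Matrix.of_apply, hA]
    congr 1
    exact Fintype.sum_equiv π _ _ (fun k => rfl)
  ext i j
  simp only [crossAttn]
  rw [mul_apply, mul_apply]
  exact Fintype.sum_equiv π _ _ (fun k => by rw [hS, hZWV])

/-- The full SPINT map is permutation-invariant: if `E` is a row-wise embedding
map (row `i` of `E(X^C)` is `f` of row `i` of `X^C`), then for every
permutation matrix `P`,
`CrossAttn(Q, P X + E(P X^C)) = CrossAttn(Q, X + E(X^C))`. -/
theorem spint_perm_invariant (B N W T : ℕ) (d : ℝ) (hd : 0 < d)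
    (Q : Matrix (Fin B) (Fin W) ℝ) (WK WV : Matrix (Fin W) (Fin W) ℝ)
    (f : (Fin T → ℝ) → (Fin W → ℝ))
    (E : Matrix (Fin N) (Fin T) ℝ → Matrix (Fin N) (Fin W) ℝ)
    (hE : ∀ XC i, E XC i = f (XC i))
    (X : Matrix (Fin N) (Fin W) ℝ) (XC : Matrix (Fin N) (Fin T) ℝ)
    (π : Equiv.Perm (Fin N)) (P : Matrix (Fin N) (Fin N) ℝ)
    (hP : ∀ i k, P i k = if k = π i then 1 else 0) :
    crossAttn d Q WK WV (P * X + E (P * XC)) =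
      crossAttn d Q WK WV (X + E XC) := by
  have hPM : ∀ {k : ℕ} (M : Matrix (Fin N) (Fin k) ℝ) (i : Fin N),
      (P * M) i = M (π i) := by
    intro k M i
    funext j
    simp [mul_apply, hP]
  apply crossAttn_rowPerm _ _ _ _ _ _ π
  intro i
  funext j
  have h1 : (P * X) i = X (π i) := hPM X i
  have h2 : E (P * XC) i = (E XC) (π i) := by
    rw [hE, hE, hPM]
  simp [h1, h2]
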